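/- Fix i ∈ {1,…,N} and fix the coordinates b_j for all j ≠ i of a strictly ordered bid profile. Then the map t ↦ W̃_i evaluated at the profile (b_1,…,b_{i−1}, t, b_{i+1},…,b_N), with the waiting times W_k recomputed from the perturbed profile, is monotone increasing in t on the interval (b_{i−1}, b_{i+1}), where b_0 := 0 and b_{N+1} := ∞. -/

import Mathlib

/-- Class expected waiting times `W_i` in the accumulating-priority M/G/1 queue
with class loads `ρ`, strictly ordered bid profile `b` and mean residual
service time `W0`, defined by Kleinrock's recursion
`W_i = (W₀/(1−ρ) − Σ_{k<i} ρ_k(1 − b_k/b_i)W_k) / (1 − Σ_{k≥i} ρ_k(1 − b_i/b_k))`. -/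
noncomputable def classW {N : ℕ} (ρ b : Fin N → ℝ) (W0 : ℝ) : Fin N → ℝ
  | i =>
    (W0 / (1 - ∑ k, ρ k)
      - ∑ k : Fin N, if h : k < i then ρ k * (1 - b k / b i) * classW ρ b W0 k else 0)
    / (1 - ∑ k : Fin N, if i ≤ k then ρ k * (1 - b i / b k) else 0)
  termination_by i => i.val
  decreasing_by exact h

/-- The first-order-condition quantity
`W̃_i(b) = (1 − Σ_{k≥i} ρ_k(1 − b_i/b_k) − (C_i/b_i²)·Σ_{k<i} ρ_k b_k W_k) / (C_i·Σ_{k≥i} ρ_k/b_k)`. -/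
noncomputable def tildeW {N : ℕ} (ρ b C : Fin N → ℝ) (W0 : ℝ) (i : Fin N) : ℝ :=
  (1 - ∑ k : Fin N, (if i ≤ k then ρ k * (1 - b i / b k) else 0)
    - C i / (b i) ^ 2 * ∑ k : Fin N, (if k < i then ρ k * b k * classW ρ b W0 k else 0))
  / (C i * ∑ k : Fin N, (if i ≤ k then ρ k / b k else 0))

set_option maxHeartbeats 1000000

namespace APQ

variable {N : ℕ}

noncomputable def SS (ρ b : Fin N → ℝ) (W0 : ℝ) (m : ℕ) : ℝ :=
  ∑ k : Fin N, if (k : ℕ) < m then ρ k * b k * classW ρ b W0 k else 0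

noncomputable def AA (ρ b : Fin N → ℝ) (W0 : ℝ) (m : ℕ) : ℝ :=
  ∑ k : Fin N, if (k : ℕ) < m then ρ k * classW ρ b W0 k else 0

noncomputable def sg (ρ : Fin N → ℝ) (m : ℕ) : ℝ :=
  ∑ k : Fin N, if m ≤ (k : ℕ) then ρ k else 0

noncomputable def muu (ρ b : Fin N → ℝ) (m : ℕ) : ℝ :=
  ∑ k : Fin N, if m ≤ (k : ℕ) then ρ k / b k else 0

lemma sum_lt_succ (f : Fin N → ℝ) (j : Fin N) :
    (∑ k : Fin N, if (k : ℕ) < j.val + 1 then f k else 0)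
      = (∑ k : Fin N, if (k : ℕ) < j.val then f k else 0) + f j := by
  have h : ∀ k : Fin N, (if (k : ℕ) < j.val + 1 then f k else 0)
      = (if (k : ℕ) < j.val then f k else 0) + (if k = j then f k else 0) := by
    intro k
    rcases eq_or_ne k j with rfl | hne
    · simp
    · have hv : (k : ℕ) ≠ j.val := fun h => hne (Fin.ext h)
      by_cases h1 : (k : ℕ) < j.val
      · rw [if_pos (by omega), if_pos h1, if_neg hne, add_zero]
      · rw [if_neg (by omega), if_neg h1, if_neg hne, add_zero]
  rw [Finset.sum_congr rfl fun k _ => h k, Finset.sum_add_distrib,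
    Finset.sum_ite_eq' Finset.univ j f, if_pos (Finset.mem_univ j)]

lemma sum_ge_split (f : Fin N → ℝ) (j : Fin N) :
    (∑ k : Fin N, if j.val ≤ (k : ℕ) then f k else 0)
      = f j + ∑ k : Fin N, if j.val + 1 ≤ (k : ℕ) then f k else 0 := by
  have h : ∀ k : Fin N, (if j.val ≤ (k : ℕ) then f k else 0)
      = (if k = j then f k else 0) + (if j.val + 1 ≤ (k : ℕ) then f k else 0) := by
    intro k
    rcases eq_or_ne k j with rfl | hne
    · simp
    · have hv : (k : ℕ) ≠ j.val := fun h => hne (Fin.ext h)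
      by_cases h1 : j.val + 1 ≤ (k : ℕ)
      · rw [if_pos (by omega), if_pos h1, if_neg hne, zero_add]
      · rw [if_neg (by omega), if_neg h1, if_neg hne, add_zero]
  rw [Finset.sum_congr rfl fun k _ => h k, Finset.sum_add_distrib,
    Finset.sum_ite_eq' Finset.univ j f, if_pos (Finset.mem_univ j)]

lemma SS_zero (ρ b : Fin N → ℝ) (W0 : ℝ) : SS ρ b W0 0 = 0 := by simp [SS]

lemma AA_zero (ρ b : Fin N → ℝ) (W0 : ℝ) : AA ρ b W0 0 = 0 := by simp [AA]

lemma sg_zero (ρ : Fin N → ℝ) : sg ρ 0 = ∑ k, ρ k := by simp [sg]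

lemma sg_nonneg (ρ : Fin N → ℝ) (hρ : ∀ k, 0 < ρ k) (m : ℕ) : 0 ≤ sg ρ m := by
  apply Finset.sum_nonneg
  intro k _
  by_cases h : m ≤ (k : ℕ) <;> simp [h, (hρ k).le]

lemma sg_le (ρ : Fin N → ℝ) (hρ : ∀ k, 0 < ρ k) (m : ℕ) : sg ρ m ≤ ∑ k, ρ k := by
  apply Finset.sum_le_sum
  intro k _
  by_cases h : m ≤ (k : ℕ) <;> simp [h, (hρ k).le]

lemma muu_nonneg (ρ b : Fin N → ℝ) (hρ : ∀ k, 0 < ρ k) (hb : ∀ k, 0 < b k) (m : ℕ) :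
    0 ≤ muu ρ b m := by
  apply Finset.sum_nonneg
  intro k _
  by_cases h : m ≤ (k : ℕ) <;> simp [h, le_of_lt (div_pos (hρ k) (hb k))]

lemma muu_succ_le (ρ b : Fin N → ℝ) (hρ : ∀ k, 0 < ρ k) (hb : ∀ k, 0 < b k) (m : ℕ) :
    muu ρ b (m + 1) ≤ muu ρ b m := by
  apply Finset.sum_le_sum
  intro k _
  by_cases h : m + 1 ≤ (k : ℕ)
  · rw [if_pos h, if_pos (by omega)]
  · rw [if_neg h]
    by_cases h2 : m ≤ (k : ℕ) <;> simp [h2, le_of_lt (div_pos (hρ k) (hb k))]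


variable {N : ℕ}

lemma Dden_eq (ρ b : Fin N → ℝ) (j : Fin N) :
    (1 - ∑ k : Fin N, if j ≤ k then ρ k * (1 - b j / b k) else 0)
      = 1 - sg ρ j.val + b j * muu ρ b j.val := by
  have h : ∀ k : Fin N, (if j ≤ k then ρ k * (1 - b j / b k) else 0)
      = (if j.val ≤ (k : ℕ) then ρ k else 0) - b j * (if j.val ≤ (k : ℕ) then ρ k / b k else 0) := by
    intro k
    by_cases hk : j ≤ k
    · rw [if_pos hk, if_pos (Fin.le_def.mp hk), if_pos (Fin.le_def.mp hk)]
      ring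
    · rw [if_neg hk, if_neg (fun h => hk (Fin.le_def.mpr h)), if_neg (fun h => hk (Fin.le_def.mpr h))]
      ring
  rw [Finset.sum_congr rfl fun k _ => h k, Finset.sum_sub_distrib, ← Finset.mul_sum]
  unfold sg muu
  ring

lemma Dden_pos (ρ b : Fin N → ℝ) (hρ : ∀ k, 0 < ρ k) (hρsum : ∑ k, ρ k < 1)
    (hbpos : ∀ k, 0 < b k) (j : Fin N) :
    0 < 1 - sg ρ j.val + b j * muu ρ b j.val := by
  have h1 := sg_le ρ hρ j.val
  have h2 := muu_nonneg ρ b hρ hbpos j.val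
  nlinarith [(hbpos j)]

lemma Wrec (ρ b : Fin N → ℝ) (W0 : ℝ) (hρ : ∀ k, 0 < ρ k) (hρsum : ∑ k, ρ k < 1)
    (hbpos : ∀ k, 0 < b k) (j : Fin N) :
    classW ρ b W0 j * ((1 - sg ρ j.val + b j * muu ρ b j.val) * b j)
      = (W0 / (1 - ∑ k, ρ k) - AA ρ b W0 j.val) * b j + SS ρ b W0 j.val := by
  have hT : (∑ k : Fin N, if h : k < j then ρ k * (1 - b k / b j) * classW ρ b W0 k else 0)
      = AA ρ b W0 j.val - SS ρ b W0 j.val / b j := by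
    have h : ∀ k : Fin N, (if h : k < j then ρ k * (1 - b k / b j) * classW ρ b W0 k else 0)
        = (if (k : ℕ) < j.val then ρ k * classW ρ b W0 k else 0)
          - (if (k : ℕ) < j.val then ρ k * b k * classW ρ b W0 k else 0) / b j := by
      intro k
      by_cases hk : k < j
      · rw [dif_pos hk, if_pos (Fin.lt_def.mp hk), if_pos (Fin.lt_def.mp hk)]
        ring
      · rw [dif_neg hk, if_neg (fun h => hk (Fin.lt_def.mpr h)),
          if_neg (fun h => hk (Fin.lt_def.mpr h))]
        ring
    rw [Finset.sum_congr rfl fun k _ => h k, Finset.sum_sub_distrib, ← Finset.sum_div]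
    rfl
  have hDpos := Dden_pos ρ b hρ hρsum hbpos j
  have hbne : b j ≠ 0 := (hbpos j).ne'
  rw [classW, hT, Dden_eq ρ b j]
  field_simp
  ring

lemma Eid (ρ b : Fin N → ℝ) (W0 : ℝ) (hρ : ∀ k, 0 < ρ k) (hρsum : ∑ k, ρ k < 1)
    (hbpos : ∀ k, 0 < b k) :
    ∀ m : ℕ, m ≤ N →
    (1 - sg ρ m) * AA ρ b W0 m + muu ρ b m * SS ρ b W0 m
      = (W0 / (1 - ∑ k, ρ k)) * ((∑ k, ρ k) - sg ρ m) := by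
  intro m
  induction m with
  | zero => simp [AA_zero, SS_zero, sg_zero]
  | succ n ih =>
    intro hn
    have hnN : n < N := hn
    set j : Fin N := ⟨n, hnN⟩ with hj
    have hE := ih hnN.le
    have hrec := Wrec ρ b W0 hρ hρsum hbpos j
    have hA : AA ρ b W0 (n + 1) = AA ρ b W0 n + ρ j * classW ρ b W0 j :=
      sum_lt_succ (fun k => ρ k * classW ρ b W0 k) j
    have hS : SS ρ b W0 (n + 1) = SS ρ b W0 n + ρ j * b j * classW ρ b W0 j :=
      sum_lt_succ (fun k => ρ k * b k * classW ρ b W0 k) j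
    have hsg : sg ρ n = ρ j + sg ρ (n + 1) := sum_ge_split (fun k => ρ k) j
    have hmu : muu ρ b n = ρ j / b j + muu ρ b (n + 1) := sum_ge_split (fun k => ρ k / b k) j
    have hbne : b j ≠ 0 := (hbpos j).ne'
    have hmu' : b j * muu ρ b n = ρ j + b j * muu ρ b (n + 1) := by
      rw [hmu]; field_simp
    apply mul_left_cancel₀ hbne
    rw [hA, hS]
    have hsg' : sg ρ (n + 1) = sg ρ n - ρ j := by linarith
    rw [hsg']
    linear_combination (b j) * hE + (ρ j) * hrec
      - (SS ρ b W0 n + ρ j * b j * classW ρ b W0 j) * hmu'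


/-- Main single-profile invariant:
nonnegativity of `W`, of `SS`, the `g ≥ 0` bound and the `μ·g ≤ W0` bound. -/
lemma inv (ρ b : Fin N → ℝ) (W0 : ℝ) (hρ : ∀ k, 0 < ρ k) (hρsum : ∑ k, ρ k < 1)
    (hbpos : ∀ k, 0 < b k) (hW0 : 0 < W0)
    (hbcons : ∀ (n : ℕ) (h1 : n < N) (h2 : n + 1 < N), b ⟨n, h1⟩ ≤ b ⟨n + 1, h2⟩) :
    ∀ n : ℕ, ∀ hn : n < N,
      0 ≤ classW ρ b W0 ⟨n, hn⟩ ∧ 0 ≤ SS ρ b W0 n ∧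
      SS ρ b W0 n ≤ (1 - sg ρ n) * (b ⟨n, hn⟩ * classW ρ b W0 ⟨n, hn⟩) ∧
      muu ρ b (n + 1) *
        ((1 - sg ρ n) * (b ⟨n, hn⟩ * classW ρ b W0 ⟨n, hn⟩) - SS ρ b W0 n) ≤ W0 := by
  have hc : 0 < W0 / (1 - ∑ k, ρ k) := div_pos hW0 (by linarith)
  have hcW0 : (W0 / (1 - ∑ k, ρ k)) * (1 - ∑ k, ρ k) = W0 :=
    div_mul_cancel₀ W0 (by linarith)
  intro n
  induction n with
  | zero =>
    intro hn
    set j : Fin N := ⟨0, hn⟩ with hjdef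
    set W := classW ρ b W0 j with hWdef
    have hrecj : W * ((1 - sg ρ 0 + b j * muu ρ b 0) * b j)
        = (W0 / (1 - ∑ k, ρ k) - AA ρ b W0 0) * b j + SS ρ b W0 0 :=
      Wrec ρ b W0 hρ hρsum hbpos j
    clear_value W
    rw [AA_zero, SS_zero, sg_zero] at hrecj
    have hDpos : 0 < 1 - sg ρ 0 + b j * muu ρ b 0 := Dden_pos ρ b hρ hρsum hbpos j
    rw [sg_zero] at hDpos
    have hβ := hbpos j
    have hW : 0 ≤ W := by
      nlinarith [mul_pos hDpos hβ, mul_pos hc hβ]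
    have hmu0 : muu ρ b 0 = ρ j / b j + muu ρ b 1 := sum_ge_split (fun k => ρ k / b k) j
    have hmu0' : b j * muu ρ b 0 = ρ j + b j * muu ρ b 1 := by
      rw [hmu0]; field_simp
    have hρt : 0 < 1 - ∑ k, ρ k := by linarith
    refine ⟨hW, by rw [SS_zero], ?_, ?_⟩
    · rw [SS_zero, sg_zero]
      exact mul_nonneg (by linarith) (mul_nonneg hβ.le hW)
    · rw [SS_zero, sg_zero, sub_zero]
      -- goal : muu 1 * ((1 - ∑ρ) * (b j * W)) ≤ W0
      have key : muu ρ b 1 * (b j * W) ≤ W0 / (1 - ∑ k, ρ k) := by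
        have h2 : 0 < b j * b j := mul_pos hβ hβ
        nlinarith [hrecj, hmu0', mul_nonneg (mul_nonneg hW hβ.le) hβ.le,
          mul_nonneg (mul_nonneg hW hβ.le) (hρ j).le,
          mul_nonneg (mul_nonneg hW hβ.le) (le_of_lt hρt)]
      calc muu ρ b 1 * ((1 - ∑ k, ρ k) * (b j * W))
          = (1 - ∑ k, ρ k) * (muu ρ b 1 * (b j * W)) := by ring
        _ ≤ (1 - ∑ k, ρ k) * (W0 / (1 - ∑ k, ρ k)) := by
            exact mul_le_mul_of_nonneg_left key hρt.le
        _ = W0 := by rw [mul_comm]; exact div_mul_cancel₀ W0 (by linarith)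
  | succ n ih =>
    intro hn1
    have hnN : n < N := by omega
    obtain ⟨hW, hS0, hg, hμg⟩ := ih hnN
    set j : Fin N := ⟨n, hnN⟩ with hjdef
    set j' : Fin N := ⟨n + 1, hn1⟩ with hj'def
    set W := classW ρ b W0 j with hWdef
    set W' := classW ρ b W0 j' with hW'def
    have hE1 : (1 - sg ρ (n + 1)) * AA ρ b W0 (n + 1) + muu ρ b (n + 1) * SS ρ b W0 (n + 1)
        = (W0 / (1 - ∑ k, ρ k)) * ((∑ k, ρ k) - sg ρ (n + 1)) :=
      Eid ρ b W0 hρ hρsum hbpos (n + 1) hn1.le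
    have hrecj : W * ((1 - sg ρ n + b j * muu ρ b n) * b j)
        = (W0 / (1 - ∑ k, ρ k) - AA ρ b W0 n) * b j + SS ρ b W0 n :=
      Wrec ρ b W0 hρ hρsum hbpos j
    have hrecj' : W' * ((1 - sg ρ (n + 1) + b j' * muu ρ b (n + 1)) * b j')
        = (W0 / (1 - ∑ k, ρ k) - AA ρ b W0 (n + 1)) * b j' + SS ρ b W0 (n + 1) :=
      Wrec ρ b W0 hρ hρsum hbpos j'
    have hA : AA ρ b W0 (n + 1) = AA ρ b W0 n + ρ j * W :=
      sum_lt_succ (fun k => ρ k * classW ρ b W0 k) j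
    have hS : SS ρ b W0 (n + 1) = SS ρ b W0 n + ρ j * b j * W :=
      sum_lt_succ (fun k => ρ k * b k * classW ρ b W0 k) j
    have hsg : sg ρ n = ρ j + sg ρ (n + 1) := sum_ge_split (fun k => ρ k) j
    have hmu : muu ρ b n = ρ j / b j + muu ρ b (n + 1) := sum_ge_split (fun k => ρ k / b k) j
    have hmu2 : muu ρ b (n + 1) = ρ j' / b j' + muu ρ b (n + 2) :=
      sum_ge_split (fun k => ρ k / b k) j'
    clear_value W W'
    have hbne : b j ≠ 0 := (hbpos j).ne'
    have hb'ne : b j' ≠ 0 := (hbpos j').ne'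
    have hmu' : b j * muu ρ b n = ρ j + b j * muu ρ b (n + 1) := by
      rw [hmu]; field_simp
    have hσ'pos : 0 < 1 - sg ρ (n + 1) := by
      have := sg_le ρ hρ (n + 1); linarith
    have hν : 0 ≤ muu ρ b (n + 1) := muu_nonneg ρ b hρ hbpos (n + 1)
    have hν2 : 0 ≤ muu ρ b (n + 2) := muu_nonneg ρ b hρ hbpos (n + 2)
    have hνle : muu ρ b (n + 2) ≤ muu ρ b (n + 1) := muu_succ_le ρ b hρ hbpos (n + 1)
    have hD'pos : 0 < 1 - sg ρ (n + 1) + b j' * muu ρ b (n + 1) :=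
      Dden_pos ρ b hρ hρsum hbpos j'
    -- identity (‡)
    have hΦ : muu ρ b (n + 1) * ((1 - sg ρ n) * (b j * W) - SS ρ b W0 n)
        = (1 - sg ρ (n + 1)) * (AA ρ b W0 (n + 1) + muu ρ b (n + 1) * (b j * W))
          - (W0 / (1 - ∑ k, ρ k)) * ((∑ k, ρ k) - sg ρ (n + 1)) := by
      rw [hS] at hE1
      rw [hsg]
      linear_combination -hE1
    have hΦle : AA ρ b W0 (n + 1) + muu ρ b (n + 1) * (b j * W) ≤ W0 / (1 - ∑ k, ρ k) := by
      have h2 : (1 - sg ρ (n + 1)) * (AA ρ b W0 (n + 1) + muu ρ b (n + 1) * (b j * W))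
          ≤ (1 - sg ρ (n + 1)) * (W0 / (1 - ∑ k, ρ k)) := by
        nlinarith [hΦ, hμg, hcW0]
      exact le_of_mul_le_mul_left h2 hσ'pos
    have hX : 0 ≤ W0 / (1 - ∑ k, ρ k)
        - (AA ρ b W0 (n + 1) + muu ρ b (n + 1) * (b j * W)) := by linarith
    have hmono_id : (b j' * W' - b j * W) * (1 - sg ρ (n + 1) + b j' * muu ρ b (n + 1))
        = (b j' - b j) * (W0 / (1 - ∑ k, ρ k)
            - (AA ρ b W0 (n + 1) + muu ρ b (n + 1) * (b j * W))) := by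
      rw [hA, hS] at hrecj'
      rw [hsg] at hrecj
      linear_combination hrecj' - hrecj + (b j' - b j) * hA + (b j * W) * hmu'
    have hbb : b j ≤ b j' := hbcons n hnN hn1
    have hmono : b j * W ≤ b j' * W' := by
      nlinarith [hmono_id, mul_nonneg (sub_nonneg.mpr hbb) hX, hD'pos]
    have hgrec : (1 - sg ρ (n + 1)) * (b j' * W') - SS ρ b W0 (n + 1)
        = ((1 - sg ρ n) * (b j * W) - SS ρ b W0 n)
          + (1 - sg ρ (n + 1)) * (b j' * W' - b j * W) := by
      rw [hS, hsg]; ring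
    have hg'0 : 0 ≤ (1 - sg ρ (n + 1)) * (b j' * W') - SS ρ b W0 (n + 1) := by
      have h3 := mul_nonneg hσ'pos.le (sub_nonneg.mpr hmono)
      linarith [hgrec]
    have hS'0 : 0 ≤ SS ρ b W0 (n + 1) := by
      rw [hS]
      have : 0 ≤ ρ j * b j * W := mul_nonneg (mul_nonneg (hρ j).le (hbpos j).le) hW
      linarith
    have hW' : 0 ≤ W' := by
      nlinarith [hg'0, hS'0, mul_pos hσ'pos (hbpos j')]
    refine ⟨hW', hS'0, by linarith, ?_⟩
    -- last component
    have hDν : muu ρ b (n + 1) * (b j' - b j) ≤ 1 - sg ρ (n + 1) + b j' * muu ρ b (n + 1) := by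
      nlinarith [mul_nonneg hν (hbpos j).le, hσ'pos]
    have e1 : (muu ρ b (n + 1) * (b j' * W' - b j * W))
          * (1 - sg ρ (n + 1) + b j' * muu ρ b (n + 1))
        = (muu ρ b (n + 1) * (b j' - b j)) * (W0 / (1 - ∑ k, ρ k)
            - (AA ρ b W0 (n + 1) + muu ρ b (n + 1) * (b j * W))) := by
      linear_combination (muu ρ b (n + 1)) * hmono_id
    have e2 : (muu ρ b (n + 1) * (b j' - b j)) * (W0 / (1 - ∑ k, ρ k)
            - (AA ρ b W0 (n + 1) + muu ρ b (n + 1) * (b j * W)))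
        ≤ (1 - sg ρ (n + 1) + b j' * muu ρ b (n + 1)) * (W0 / (1 - ∑ k, ρ k)
            - (AA ρ b W0 (n + 1) + muu ρ b (n + 1) * (b j * W))) :=
      mul_le_mul_of_nonneg_right hDν hX
    have hstep1 : muu ρ b (n + 1) * (b j' * W' - b j * W)
        ≤ W0 / (1 - ∑ k, ρ k) - (AA ρ b W0 (n + 1) + muu ρ b (n + 1) * (b j * W)) := by
      nlinarith [e1, e2, hD'pos]
    have h7 : muu ρ b (n + 1) * ((1 - sg ρ (n + 1)) * (b j' * W') - SS ρ b W0 (n + 1))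
        = muu ρ b (n + 1) * ((1 - sg ρ n) * (b j * W) - SS ρ b W0 n)
          + (1 - sg ρ (n + 1)) * (muu ρ b (n + 1) * (b j' * W' - b j * W)) := by
      linear_combination (muu ρ b (n + 1)) * hgrec
    have h8 : (1 - sg ρ (n + 1)) * (muu ρ b (n + 1) * (b j' * W' - b j * W))
        ≤ (1 - sg ρ (n + 1)) * (W0 / (1 - ∑ k, ρ k)
            - (AA ρ b W0 (n + 1) + muu ρ b (n + 1) * (b j * W))) :=
      mul_le_mul_of_nonneg_left hstep1 hσ'pos.le
    have h9 : muu ρ b (n + 1) * ((1 - sg ρ n) * (b j * W) - SS ρ b W0 n)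
          + (1 - sg ρ (n + 1)) * (W0 / (1 - ∑ k, ρ k)
            - (AA ρ b W0 (n + 1) + muu ρ b (n + 1) * (b j * W))) = W0 := by
      linear_combination hΦ + hcW0
    have h10 : muu ρ b (n + 2) * ((1 - sg ρ (n + 1)) * (b j' * W') - SS ρ b W0 (n + 1))
        ≤ muu ρ b (n + 1) * ((1 - sg ρ (n + 1)) * (b j' * W') - SS ρ b W0 (n + 1)) :=
      mul_le_mul_of_nonneg_right hνle hg'0
    linarith [h7, h8, h9, h10, hμg]


lemma mu_diff (ρ p q : Fin N → ℝ) (i : Fin N) (s t : ℝ)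
    (hpq : ∀ k, k ≠ i → p k = q k) (hpi : p i = s) (hqi : q i = t)
    (m : ℕ) (hm : m ≤ i.val) :
    muu ρ p m - muu ρ q m = ρ i * (1 / s - 1 / t) := by
  unfold muu
  rw [← Finset.sum_sub_distrib, Finset.sum_eq_single i]
  · rw [if_pos hm, if_pos hm, hpi, hqi]; ring
  · intro k _ hk
    rw [hpq k hk]; ring
  · intro h; exact absurd (Finset.mem_univ i) h

lemma deltaW (ρ : Fin N → ℝ) (W0 s t : ℝ) (i : Fin N) (p q : Fin N → ℝ)
    (hρ : ∀ k, 0 < ρ k) (hρsum : ∑ k, ρ k < 1) (hW0 : 0 < W0)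
    (hs : 0 < s) (hst : s ≤ t)
    (hppos : ∀ k, 0 < p k) (hqpos : ∀ k, 0 < q k)
    (hpq : ∀ k, k ≠ i → p k = q k) (hpi : p i = s) (hqi : q i = t)
    (hpcons : ∀ (n : ℕ) (h1 : n < N) (h2 : n + 1 < N), p ⟨n, h1⟩ ≤ p ⟨n + 1, h2⟩) :
    ∀ n : ℕ, n ≤ i.val → ∀ k : Fin N, (k : ℕ) < n →
      classW ρ p W0 k ≤ classW ρ q W0 k := by
  have hWp : ∀ k : Fin N, 0 ≤ classW ρ p W0 k := fun k =>
    (inv ρ p W0 hρ hρsum hppos hW0 hpcons k.val k.isLt).1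
  have hθ : 0 ≤ 1 / s - 1 / t := by
    have := one_div_le_one_div_of_le hs hst
    linarith
  intro n
  induction n with
  | zero => intro _ k hk; omega
  | succ n ihd =>
    intro hn1 k hk
    have hn : n ≤ i.val := by omega
    by_cases hkn : (k : ℕ) < n
    · exact ihd hn k hkn
    have hkv : (k : ℕ) = n := by omega
    have hkiv : (k : ℕ) < i.val := by omega
    have hki : k ≠ i := by
      intro h; rw [h] at hkiv; omega
    have hd : ∀ k' : Fin N, (k' : ℕ) < (k : ℕ) → classW ρ p W0 k' ≤ classW ρ q W0 k' := by
      intro k' h'; exact ihd hn k' (by omega)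
    -- sums compare
    have hAle : AA ρ p W0 k.val ≤ AA ρ q W0 k.val := by
      apply Finset.sum_le_sum
      intro k' _
      by_cases h : (k' : ℕ) < (k : ℕ)
      · rw [if_pos h, if_pos h]
        exact mul_le_mul_of_nonneg_left (hd k' h) (hρ k').le
      · rw [if_neg h, if_neg h]
    have hSle : SS ρ p W0 k.val ≤ SS ρ q W0 k.val := by
      apply Finset.sum_le_sum
      intro k' _
      by_cases h : (k' : ℕ) < (k : ℕ)
      · rw [if_pos h, if_pos h]
        have hk'i : k' ≠ i := by
          intro he; rw [he] at h; omega
        rw [hpq k' hk'i]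
        have := mul_le_mul_of_nonneg_left (hd k' h) (mul_pos (hρ k') (hqpos k')).le
        calc ρ k' * q k' * classW ρ p W0 k' = ρ k' * q k' * classW ρ p W0 k' := rfl
          _ ≤ ρ k' * q k' * classW ρ q W0 k' := by
              exact mul_le_mul_of_nonneg_left (hd k' h) (mul_pos (hρ k') (hqpos k')).le
      · rw [if_neg h, if_neg h]
    have hkN : (k : ℕ) ≤ N := k.isLt.le
    have hEp := Eid ρ p W0 hρ hρsum hppos k.val hkN
    have hEq := Eid ρ q W0 hρ hρsum hqpos k.val hkN
    have hμd := mu_diff ρ p q i s t hpq hpi hqi k.val hkiv.le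
    have hstar : (1 - sg ρ k.val) * (AA ρ q W0 k.val - AA ρ p W0 k.val)
        + muu ρ q k.val * (SS ρ q W0 k.val - SS ρ p W0 k.val)
        = ρ i * (1 / s - 1 / t) * SS ρ p W0 k.val := by
      linear_combination hEq - hEp + SS ρ p W0 k.val * hμd
    have hgp : SS ρ p W0 k.val ≤ (1 - sg ρ k.val) * (p k * classW ρ p W0 k) :=
      (inv ρ p W0 hρ hρsum hppos hW0 hpcons k.val k.isLt).2.2.1
    have hSp0 : 0 ≤ SS ρ p W0 k.val :=
      (inv ρ p W0 hρ hρsum hppos hW0 hpcons k.val k.isLt).2.1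
    have hrecp : classW ρ p W0 k * ((1 - sg ρ k.val + p k * muu ρ p k.val) * p k)
        = (W0 / (1 - ∑ k, ρ k) - AA ρ p W0 k.val) * p k + SS ρ p W0 k.val :=
      Wrec ρ p W0 hρ hρsum hppos k
    have hrecq : classW ρ q W0 k * ((1 - sg ρ k.val + q k * muu ρ q k.val) * q k)
        = (W0 / (1 - ∑ k, ρ k) - AA ρ q W0 k.val) * q k + SS ρ q W0 k.val :=
      Wrec ρ q W0 hρ hρsum hqpos k
    have hpqk : q k = p k := (hpq k hki).symm
    rw [hpqk] at hrecq
    have hΔrec : (classW ρ q W0 k - classW ρ p W0 k)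
          * ((1 - sg ρ k.val + p k * muu ρ q k.val) * p k)
        = ρ i * (1 / s - 1 / t) * (p k * p k) * classW ρ p W0 k
          - (AA ρ q W0 k.val - AA ρ p W0 k.val) * p k
          + (SS ρ q W0 k.val - SS ρ p W0 k.val) := by
      linear_combination hrecq - hrecp + (classW ρ p W0 k * (p k * p k)) * hμd
    have hσpos : 0 < 1 - sg ρ k.val := by
      have := sg_le ρ hρ k.val; linarith
    have hμq0 : 0 ≤ muu ρ q k.val := muu_nonneg ρ q hρ hqpos k.val
    -- bound : (AA q - AA p) ≤ ρ i θ * (p k * Wp k)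
    have hb1 : (1 - sg ρ k.val) * (AA ρ q W0 k.val - AA ρ p W0 k.val)
        ≤ ρ i * (1 / s - 1 / t) * SS ρ p W0 k.val := by
      nlinarith [mul_nonneg hμq0 (sub_nonneg.mpr hSle)]
    have hb2 : ρ i * (1 / s - 1 / t) * SS ρ p W0 k.val
        ≤ ρ i * (1 / s - 1 / t) * ((1 - sg ρ k.val) * (p k * classW ρ p W0 k)) :=
      mul_le_mul_of_nonneg_left hgp (mul_nonneg (hρ i).le hθ)
    have hb3 : AA ρ q W0 k.val - AA ρ p W0 k.val
        ≤ ρ i * (1 / s - 1 / t) * (p k * classW ρ p W0 k) := by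
      have h4 : (1 - sg ρ k.val) * (AA ρ q W0 k.val - AA ρ p W0 k.val)
          ≤ (1 - sg ρ k.val) * (ρ i * (1 / s - 1 / t) * (p k * classW ρ p W0 k)) := by
        nlinarith [hb1, hb2]
      exact le_of_mul_le_mul_left h4 hσpos
    have hDq : 0 < 1 - sg ρ k.val + p k * muu ρ q k.val := by
      have := Dden_pos ρ q hρ hρsum hqpos k
      rw [hpqk] at this
      exact this
    have hpk := hppos k
    -- RHS of hΔrec is nonneg
    have hrhs : 0 ≤ ρ i * (1 / s - 1 / t) * (p k * p k) * classW ρ p W0 k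
          - (AA ρ q W0 k.val - AA ρ p W0 k.val) * p k
          + (SS ρ q W0 k.val - SS ρ p W0 k.val) := by
      have h5 := mul_le_mul_of_nonneg_right hb3 hpk.le
      nlinarith [hSle]
    nlinarith [hΔrec, hrhs, mul_pos hDq hpk]

lemma keyS (ρ : Fin N → ℝ) (W0 s t : ℝ) (i : Fin N) (p q : Fin N → ℝ)
    (hρ : ∀ k, 0 < ρ k) (hρsum : ∑ k, ρ k < 1) (hW0 : 0 < W0)
    (hs : 0 < s) (hst : s ≤ t)
    (hppos : ∀ k, 0 < p k) (hqpos : ∀ k, 0 < q k)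
    (hpq : ∀ k, k ≠ i → p k = q k) (hpi : p i = s) (hqi : q i = t)
    (hpcons : ∀ (n : ℕ) (h1 : n < N) (h2 : n + 1 < N), p ⟨n, h1⟩ ≤ p ⟨n + 1, h2⟩) :
    s * SS ρ q W0 i.val ≤ t * SS ρ p W0 i.val := by
  have ht : 0 < t := lt_of_lt_of_le hs hst
  have hθ : 0 ≤ 1 / s - 1 / t := by
    have := one_div_le_one_div_of_le hs hst
    linarith
  have hd := deltaW ρ W0 s t i p q hρ hρsum hW0 hs hst hppos hqpos hpq hpi hqi hpcons
    i.val le_rfl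
  have hWp : ∀ k : Fin N, 0 ≤ classW ρ p W0 k := fun k =>
    (inv ρ p W0 hρ hρsum hppos hW0 hpcons k.val k.isLt).1
  have hAle : AA ρ p W0 i.val ≤ AA ρ q W0 i.val := by
    apply Finset.sum_le_sum
    intro k' _
    by_cases h : (k' : ℕ) < (i : ℕ)
    · rw [if_pos h, if_pos h]
      exact mul_le_mul_of_nonneg_left (hd k' h) (hρ k').le
    · rw [if_neg h, if_neg h]
  have hSle : SS ρ p W0 i.val ≤ SS ρ q W0 i.val := by
    apply Finset.sum_le_sum
    intro k' _
    by_cases h : (k' : ℕ) < (i : ℕ)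
    · rw [if_pos h, if_pos h]
      have hk'i : k' ≠ i := by
        intro he; rw [he] at h; omega
      rw [hpq k' hk'i]
      exact mul_le_mul_of_nonneg_left (hd k' h) (mul_pos (hρ k') (hqpos k')).le
    · rw [if_neg h, if_neg h]
  have hEp := Eid ρ p W0 hρ hρsum hppos i.val i.isLt.le
  have hEq := Eid ρ q W0 hρ hρsum hqpos i.val i.isLt.le
  have hμd := mu_diff ρ p q i s t hpq hpi hqi i.val le_rfl
  have hstar : (1 - sg ρ i.val) * (AA ρ q W0 i.val - AA ρ p W0 i.val)
      + muu ρ q i.val * (SS ρ q W0 i.val - SS ρ p W0 i.val)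
      = ρ i * (1 / s - 1 / t) * SS ρ p W0 i.val := by
    linear_combination hEq - hEp + SS ρ p W0 i.val * hμd
  have hσpos : 0 < 1 - sg ρ i.val := by
    have := sg_le ρ hρ i.val; linarith
  have hμq_ge : ρ i / t ≤ muu ρ q i.val := by
    have h1 : ∀ k : Fin N, k ∈ Finset.univ →
        0 ≤ (if i.val ≤ (k : ℕ) then ρ k / q k else 0) := by
      intro k _
      by_cases h : i.val ≤ (k : ℕ) <;> simp [h, le_of_lt (div_pos (hρ k) (hqpos k))]
    have h2 := Finset.single_le_sum h1 (Finset.mem_univ i)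
    rw [if_pos le_rfl, hqi] at h2
    exact h2
  have hSp0 : 0 ≤ SS ρ p W0 i.val := by
    apply Finset.sum_nonneg
    intro k _
    by_cases h : (k : ℕ) < (i : ℕ)
    · rw [if_pos h]
      exact mul_nonneg (mul_nonneg (hρ k).le (hppos k).le) (hWp k)
    · rw [if_neg h]
  -- μq (Sq - Sp) ≤ ρ i θ Sp
  have h3 : muu ρ q i.val * (SS ρ q W0 i.val - SS ρ p W0 i.val)
      ≤ ρ i * (1 / s - 1 / t) * SS ρ p W0 i.val := by
    nlinarith [mul_nonneg hσpos.le (sub_nonneg.mpr hAle)]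
  have h4 : (ρ i / t) * (SS ρ q W0 i.val - SS ρ p W0 i.val)
      ≤ ρ i * (1 / s - 1 / t) * SS ρ p W0 i.val :=
    le_trans (mul_le_mul_of_nonneg_right hμq_ge (sub_nonneg.mpr hSle)) h3
  -- multiply by s * t > 0
  have h5 := mul_le_mul_of_nonneg_right h4 (mul_pos hs ht).le
  have e1 : (ρ i / t) * (SS ρ q W0 i.val - SS ρ p W0 i.val) * (s * t)
      = ρ i * (s * (SS ρ q W0 i.val - SS ρ p W0 i.val)) := by
    field_simp
  have e2 : ρ i * (1 / s - 1 / t) * SS ρ p W0 i.val * (s * t)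
      = ρ i * ((t - s) * SS ρ p W0 i.val) := by
    field_simp
  rw [e1, e2] at h5
  have h6 := le_of_mul_le_mul_left h5 (hρ i)
  nlinarith [h6]

lemma SS_nonneg (ρ b : Fin N → ℝ) (W0 : ℝ) (hρ : ∀ k, 0 < ρ k) (hρsum : ∑ k, ρ k < 1)
    (hbpos : ∀ k, 0 < b k) (hW0 : 0 < W0)
    (hbcons : ∀ (n : ℕ) (h1 : n < N) (h2 : n + 1 < N), b ⟨n, h1⟩ ≤ b ⟨n + 1, h2⟩)
    (m : ℕ) : 0 ≤ SS ρ b W0 m := by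
  apply Finset.sum_nonneg
  intro k _
  by_cases h : (k : ℕ) < m
  · rw [if_pos h]
    exact mul_nonneg (mul_nonneg (hρ k).le (hbpos k).le)
      ((inv ρ b W0 hρ hρsum hbpos hW0 hbcons k.val k.isLt).1)
  · rw [if_neg h]

end APQ

open APQ

/-- Perturbing the `i`-th coordinate of a strictly ordered positive bid profile
within the interval `(b_{i-1}, b_{i+1})` (with `b_0 := 0`, `b_{N+1} := ∞`),
the quantity `W̃_i`, recomputed from the perturbed profile, is monotone
increasing in the perturbed bid. Membership of `s ≤ t` in the interval is
expressed by `0 < s`, `b j < s` for all `j < i`, and `t < b j` for all `j > i`. -/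
theorem tildeW_monotone_in_own_bid (N : ℕ) (hN : 1 ≤ N)
    (ρ b C : Fin N → ℝ) (W0 : ℝ) (i : Fin N)
    (hρ : ∀ k, 0 < ρ k) (hρsum : ∑ k, ρ k < 1) (hW0 : 0 < W0)
    (hbpos : ∀ k, 0 < b k) (hbmono : StrictMono b) (hC : ∀ k, 0 < C k) :
    ∀ s t : ℝ, 0 < s → (∀ j : Fin N, j < i → b j < s) →
      (∀ j : Fin N, i < j → t < b j) → s ≤ t →
      tildeW ρ (Function.update b i s) C W0 i ≤
        tildeW ρ (Function.update b i t) C W0 i := by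
  intro s t hs hlow hhigh hst
  have ht : 0 < t := lt_of_lt_of_le hs hst
  set p := Function.update b i s with hp
  set q := Function.update b i t with hq
  have hpi : p i = s := Function.update_self i s b
  have hqi : q i = t := Function.update_self i t b
  have hpq : ∀ k, k ≠ i → p k = q k := by
    intro k hk
    rw [hp, hq, Function.update_of_ne hk, Function.update_of_ne hk]
  have hpb : ∀ k, k ≠ i → p k = b k := by
    intro k hk; rw [hp, Function.update_of_ne hk]
  have hqb : ∀ k, k ≠ i → q k = b k := by
    intro k hk; rw [hq, Function.update_of_ne hk]
  have hppos : ∀ k, 0 < p k := by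
    intro k
    by_cases h : k = i
    · rw [h, hpi]; exact hs
    · rw [hpb k h]; exact hbpos k
  have hqpos : ∀ k, 0 < q k := by
    intro k
    by_cases h : k = i
    · rw [h, hqi]; exact ht
    · rw [hqb k h]; exact hbpos k
  have hpcons : ∀ (n : ℕ) (h1 : n < N) (h2 : n + 1 < N), p ⟨n, h1⟩ ≤ p ⟨n + 1, h2⟩ := by
    intro n h1 h2
    have huv : (⟨n, h1⟩ : Fin N) < ⟨n + 1, h2⟩ := by simp [Fin.lt_def]
    by_cases hui : (⟨n, h1⟩ : Fin N) = i
    · have hvi : (⟨n + 1, h2⟩ : Fin N) ≠ i := by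
        intro h; rw [← hui] at h
        exact absurd (congrArg Fin.val h) (by simp)
      have hiv : i < (⟨n + 1, h2⟩ : Fin N) := by rw [← hui]; exact huv
      rw [hui, hpi, hpb _ hvi]
      linarith [hhigh _ hiv]
    · by_cases hvi : (⟨n + 1, h2⟩ : Fin N) = i
      · have hui2 : (⟨n, h1⟩ : Fin N) < i := by rw [← hvi]; exact huv
        rw [hpb _ hui, hvi, hpi]
        exact (hlow _ hui2).le
      · rw [hpb _ hui, hpb _ hvi]
        exact (hbmono huv).le
  have hqcons : ∀ (n : ℕ) (h1 : n < N) (h2 : n + 1 < N), q ⟨n, h1⟩ ≤ q ⟨n + 1, h2⟩ := by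
    intro n h1 h2
    have huv : (⟨n, h1⟩ : Fin N) < ⟨n + 1, h2⟩ := by simp [Fin.lt_def]
    by_cases hui : (⟨n, h1⟩ : Fin N) = i
    · have hvi : (⟨n + 1, h2⟩ : Fin N) ≠ i := by
        intro h; rw [← hui] at h
        exact absurd (congrArg Fin.val h) (by simp)
      have hiv : i < (⟨n + 1, h2⟩ : Fin N) := by rw [← hui]; exact huv
      rw [hui, hqi, hqb _ hvi]
      exact (hhigh _ hiv).le
    · by_cases hvi : (⟨n + 1, h2⟩ : Fin N) = i
      · have hui2 : (⟨n, h1⟩ : Fin N) < i := by rw [← hvi]; exact huv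
        rw [hqb _ hui, hvi, hqi]
        linarith [hlow _ hui2]
      · rw [hqb _ hui, hqb _ hvi]
        exact (hbmono huv).le
  have hkey := keyS ρ W0 s t i p q hρ hρsum hW0 hs hst hppos hqpos hpq hpi hqi hpcons
  have hSp0 : 0 ≤ SS ρ p W0 i.val :=
    SS_nonneg ρ p W0 hρ hρsum hppos hW0 hpcons i.val
  have hSq0 : 0 ≤ SS ρ q W0 i.val :=
    SS_nonneg ρ q W0 hρ hρsum hqpos hW0 hqcons i.val
  -- rewrite tildeW
  have eSp : (∑ k : Fin N, if k < i then ρ k * p k * classW ρ p W0 k else 0)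
      = SS ρ p W0 i.val := by
    apply Finset.sum_congr rfl
    intro k _
    by_cases h : k < i
    · rw [if_pos h, if_pos (Fin.lt_def.mp h)]
    · rw [if_neg h, if_neg (fun hh => h (Fin.lt_def.mpr hh))]
  have eSq : (∑ k : Fin N, if k < i then ρ k * q k * classW ρ q W0 k else 0)
      = SS ρ q W0 i.val := by
    apply Finset.sum_congr rfl
    intro k _
    by_cases h : k < i
    · rw [if_pos h, if_pos (Fin.lt_def.mp h)]
    · rw [if_neg h, if_neg (fun hh => h (Fin.lt_def.mpr hh))]
  have eμp : (∑ k : Fin N, if i ≤ k then ρ k / p k else 0) = muu ρ p i.val := by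
    apply Finset.sum_congr rfl
    intro k _
    by_cases h : i ≤ k
    · rw [if_pos h, if_pos (Fin.le_def.mp h)]
    · rw [if_neg h, if_neg (fun hh => h (Fin.le_def.mpr hh))]
  have eμq : (∑ k : Fin N, if i ≤ k then ρ k / q k else 0) = muu ρ q i.val := by
    apply Finset.sum_congr rfl
    intro k _
    by_cases h : i ≤ k
    · rw [if_pos h, if_pos (Fin.le_def.mp h)]
    · rw [if_neg h, if_neg (fun hh => h (Fin.le_def.mpr hh))]
  have etp : tildeW ρ p C W0 i
      = (1 - sg ρ i.val + s * muu ρ p i.val - C i / s ^ 2 * SS ρ p W0 i.val)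
        / (C i * muu ρ p i.val) := by
    unfold tildeW
    rw [Dden_eq ρ p i, eSp, eμp, hpi]
  have etq : tildeW ρ q C W0 i
      = (1 - sg ρ i.val + t * muu ρ q i.val - C i / t ^ 2 * SS ρ q W0 i.val)
        / (C i * muu ρ q i.val) := by
    unfold tildeW
    rw [Dden_eq ρ q i, eSq, eμq, hqi]
  -- explicit μ
  have hap : muu ρ p (i.val + 1) = muu ρ q (i.val + 1) := by
    apply Finset.sum_congr rfl
    intro k _
    by_cases h : i.val + 1 ≤ (k : ℕ)
    · have hk : k ≠ i := by
        intro he; rw [he] at h; omega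
      rw [if_pos h, if_pos h, hpq k hk]
    · rw [if_neg h, if_neg h]
  have ha0 : 0 ≤ muu ρ p (i.val + 1) := muu_nonneg ρ p hρ hppos _
  have hμp_eq : muu ρ p i.val = ρ i / s + muu ρ p (i.val + 1) := by
    have h := sum_ge_split (fun k => ρ k / p k) i
    rw [hpi] at h
    exact h
  have hμq_eq : muu ρ q i.val = ρ i / t + muu ρ p (i.val + 1) := by
    have h := sum_ge_split (fun k => ρ k / q k) i
    rw [hqi] at h
    have h2 : muu ρ q i.val = ρ i / t + muu ρ q (i.val + 1) := h
    rw [← hap] at h2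
    exact h2
  have hμp_pos : 0 < muu ρ p i.val := by
    rw [hμp_eq]
    have := div_pos (hρ i) hs
    linarith
  have hμq_pos : 0 < muu ρ q i.val := by
    rw [hμq_eq]
    have := div_pos (hρ i) ht
    linarith
  have hσpos : 0 < 1 - sg ρ i.val := by
    have := sg_le ρ hρ i.val; linarith
  set a := muu ρ p (i.val + 1) with hadef
  set Sp := SS ρ p W0 i.val with hSpdef
  set Sq := SS ρ q W0 i.val with hSqdef
  set g := sg ρ i.val with hgdef
  have hd2p : 0 < C i * (ρ i * s + a * s ^ 2) := by
    have h1 : 0 < ρ i * s := mul_pos (hρ i) hs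
    have h2 : 0 ≤ a * s ^ 2 := mul_nonneg ha0 (sq_nonneg s)
    nlinarith [hC i]
  have hd2q : 0 < C i * (ρ i * t + a * t ^ 2) := by
    have h1 : 0 < ρ i * t := mul_pos (hρ i) ht
    have h2 : 0 ≤ a * t ^ 2 := mul_nonneg ha0 (sq_nonneg t)
    nlinarith [hC i]
  have ep2 : (1 - g + s * muu ρ p i.val - C i / s ^ 2 * Sp) / (C i * muu ρ p i.val)
      = ((1 - g + ρ i) * s ^ 2 + a * s ^ 3 - C i * Sp) / (C i * (ρ i * s + a * s ^ 2)) := by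
    have hd1p : C i * (ρ i / s + a) ≠ 0 :=
      (mul_pos (hC i) (by have := div_pos (hρ i) hs; linarith)).ne'
    rw [hμp_eq, div_eq_div_iff hd1p hd2p.ne']
    field_simp
    ring
  have eq2 : (1 - g + t * muu ρ q i.val - C i / t ^ 2 * Sq) / (C i * muu ρ q i.val)
      = ((1 - g + ρ i) * t ^ 2 + a * t ^ 3 - C i * Sq) / (C i * (ρ i * t + a * t ^ 2)) := by
    have hd1q : C i * (ρ i / t + a) ≠ 0 :=
      (mul_pos (hC i) (by have := div_pos (hρ i) ht; linarith)).ne'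
    rw [hμq_eq, div_eq_div_iff hd1q hd2q.ne']
    field_simp
    ring
  rw [etp, etq, ep2, eq2, div_le_div_iff₀ hd2p hd2q]
  have hkey' : 0 ≤ t * Sp - s * Sq := by linarith
  have hts : 0 ≤ t - s := by linarith
  have hDid : ((1 - g + ρ i) * t ^ 2 + a * t ^ 3 - C i * Sq) * (ρ i * s + a * s ^ 2)
      - ((1 - g + ρ i) * s ^ 2 + a * s ^ 3 - C i * Sp) * (ρ i * t + a * t ^ 2)
      = (1 - g + ρ i) * ρ i * s * t * (t - s)
        + a * ρ i * s * t * (t + s) * (t - s)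
        + a ^ 2 * s ^ 2 * t ^ 2 * (t - s)
        + C i * ρ i * (t * Sp - s * Sq)
        + C i * a * (t * (t * Sp - s * Sq) + s * Sq * (t - s)) := by
    ring
  have hK' : 0 ≤ 1 - g + ρ i := by linarith [(hρ i).le]
  have n1 : 0 ≤ (1 - g + ρ i) * ρ i * s * t * (t - s) :=
    mul_nonneg (mul_nonneg (mul_nonneg (mul_nonneg hK' (hρ i).le) hs.le) ht.le) hts
  have n2 : 0 ≤ a * ρ i * s * t * (t + s) * (t - s) :=
    mul_nonneg (mul_nonneg (mul_nonneg (mul_nonneg (mul_nonneg ha0 (hρ i).le) hs.le) ht.le)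
      (by linarith)) hts
  have n3 : 0 ≤ a ^ 2 * s ^ 2 * t ^ 2 * (t - s) :=
    mul_nonneg (mul_nonneg (mul_nonneg (sq_nonneg a) (sq_nonneg s)) (sq_nonneg t)) hts
  have n4 : 0 ≤ C i * ρ i * (t * Sp - s * Sq) :=
    mul_nonneg (mul_nonneg (hC i).le (hρ i).le) hkey'
  have n5 : 0 ≤ C i * a * (t * (t * Sp - s * Sq) + s * Sq * (t - s)) := by
    have i1 : 0 ≤ t * (t * Sp - s * Sq) := mul_nonneg ht.le hkey'
    have i2 : 0 ≤ s * Sq * (t - s) := mul_nonneg (mul_nonneg hs.le hSq0) hts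
    exact mul_nonneg (mul_nonneg (hC i).le ha0) (by linarith)
  have hfin : ((1 - g + ρ i) * s ^ 2 + a * s ^ 3 - C i * Sp) * (ρ i * t + a * t ^ 2)
      ≤ ((1 - g + ρ i) * t ^ 2 + a * t ^ 3 - C i * Sq) * (ρ i * s + a * s ^ 2) := by
    linarith [hDid, n1, n2, n3, n4, n5]
  nlinarith [mul_le_mul_of_nonneg_left hfin (hC i).le]
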